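/- For a decorated permutation σ ∈ S̃_n with σ ≠ θ, define DEX(σ) as the descent set of the word σ̄ over the ordered alphabet 1̄ < ··· < n̄ < 0 < 1 < ··· < n obtained from σ by barring σ_i whenever σ_i > i; and DEX(θ) = ∅. Then Σ_{i ∈ DEX(σ)} i = maj(σ) − exc(σ) for every σ ∈ S̃_n. -/

import Mathlib

open scoped Classical

/-- A decorated permutation of `[n]`, encoded as its one-line word
`w : Fin n → Fin (n+1)` (position `i` is the 1-based position `i+1`, value `0`
means no value): the nonzero entries are distinct, and every nonzero value is
(the 1-based name of) a position carrying a nonzero entry.  Hence the nonzero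
entries form a permutation of their set of positions. -/
def IsDecorated {n : ℕ} (w : Fin n → Fin (n + 1)) : Prop :=
  (∀ i j, (w i : ℕ) ≠ 0 → w i = w j → i = j) ∧
  (∀ i, (w i : ℕ) ≠ 0 → ∃ j : Fin n, (w j : ℕ) ≠ 0 ∧ (w i : ℕ) = (j : ℕ) + 1)

/-- The all-zero decorated permutation `θ`. -/
def isTheta {n : ℕ} (w : Fin n → Fin (n + 1)) : Prop := ∀ i, (w i : ℕ) = 0

/-- The number of excedances of a decorated permutation (positions `i` with
`w_i > i`, in 1-based terms). -/
def dExc {n : ℕ} (w : Fin n → Fin (n + 1)) : ℕ :=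
  (Finset.univ.filter (fun i : Fin n => (i : ℕ) + 1 < (w i : ℕ))).card

/-- `exc(w) + 1`, where `exc(θ) = -1`. -/
noncomputable def dExcP1 {n : ℕ} (w : Fin n → Fin (n + 1)) : ℕ :=
  if isTheta w then 0 else dExc w + 1

/-- The number of descents of the one-line word of a decorated permutation,
with respect to the order `0 < 1 < ⋯ < n`. -/
def dDes {n : ℕ} (w : Fin n → Fin (n + 1)) : ℕ :=
  ((Finset.range n).filter (fun i =>
    ∃ h : i + 1 < n, (w ⟨i + 1, h⟩ : ℕ) < (w ⟨i, Nat.lt_of_succ_lt h⟩ : ℕ))).card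

/-- The major index of the one-line word of a decorated permutation. -/
def dMaj {n : ℕ} (w : Fin n → Fin (n + 1)) : ℕ :=
  ∑ i ∈ (Finset.range n).filter (fun i =>
      ∃ h : i + 1 < n, (w ⟨i + 1, h⟩ : ℕ) < (w ⟨i, Nat.lt_of_succ_lt h⟩ : ℕ)), (i + 1)

/-- The letter at position `i` of the barred word `σ̄` of a decorated
permutation, over the alphabet `1̄ < ⋯ < n̄ < 0 < 1 < ⋯ < n` encoded in `ℤ`
(`k̄ ↦ k - (n+1)`, unbarred letters unchanged); position `i` is barred exactly
when it is an excedance (`w_i > i` in 1-based terms). -/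
def dBarred {n : ℕ} (w : Fin n → Fin (n + 1)) (i : Fin n) : ℤ :=
  if (i : ℕ) + 1 < (w i : ℕ) then ((w i : ℕ) : ℤ) - (n + 1) else ((w i : ℕ) : ℤ)

/-- `DEX(σ)` for a decorated permutation: the descent set of the barred word,
as 0-based indices (so index `i` records the 1-based position `i+1`).  For the
all-zero word `θ` this set is empty. -/
def dDEXset {n : ℕ} (w : Fin n → Fin (n + 1)) : Finset ℕ :=
  (Finset.range n).filter (fun i =>
    ∃ h : i + 1 < n, dBarred w ⟨i + 1, h⟩ < dBarred w ⟨i, Nat.lt_of_succ_lt h⟩)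

/-- `maj(w)` as an integer, with `maj(θ) = -1`. -/
noncomputable def dMajZ {n : ℕ} (w : Fin n → Fin (n + 1)) : ℤ :=
  if isTheta w then -1 else dMaj w

/-- `exc(w)` as an integer, with `exc(θ) = -1`. -/
noncomputable def dExcZ {n : ℕ} (w : Fin n → Fin (n + 1)) : ℤ :=
  if isTheta w then -1 else dExc w

def chiW {n : ℕ} (w : Fin n → Fin (n + 1)) (i : ℕ) : ℤ :=
  if h : i < n then (if i + 1 < (w ⟨i, h⟩ : ℕ) then 1 else 0) else 0

lemma chiW_top {n : ℕ} (w : Fin n → Fin (n + 1)) : chiW w n = 0 := dif_neg (lt_irrefl n)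

lemma pointwise {n : ℕ} (w : Fin n → Fin (n + 1)) (hw : IsDecorated w)
    (i : ℕ) (hi : i < n) :
    ((if (∃ h : i + 1 < n, (w ⟨i + 1, h⟩ : ℕ) < (w ⟨i, Nat.lt_of_succ_lt h⟩ : ℕ)) then ((i:ℤ)+1) else 0)
      - (if (∃ h : i + 1 < n, dBarred w ⟨i + 1, h⟩ < dBarred w ⟨i, Nat.lt_of_succ_lt h⟩) then ((i:ℤ)+1) else 0))
    = ((i:ℤ)+1) * (chiW w i - chiW w (i+1)) := by
  by_cases h1 : i + 1 < n
  · have hea : (∃ h : i + 1 < n, (w ⟨i + 1, h⟩ : ℕ) < (w ⟨i, Nat.lt_of_succ_lt h⟩ : ℕ)) ↔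
        ((w ⟨i + 1, h1⟩ : ℕ) < (w ⟨i, hi⟩ : ℕ)) := ⟨fun ⟨_, q⟩ => q, fun q => ⟨h1, q⟩⟩
    have heb : (∃ h : i + 1 < n, dBarred w ⟨i + 1, h⟩ < dBarred w ⟨i, Nat.lt_of_succ_lt h⟩) ↔
        (dBarred w ⟨i + 1, h1⟩ < dBarred w ⟨i, hi⟩) := ⟨fun ⟨_, q⟩ => q, fun q => ⟨h1, q⟩⟩
    have ha : (w ⟨i, hi⟩ : ℕ) ≤ n := Nat.lt_succ_iff.mp (w ⟨i, hi⟩).isLt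
    have hb : (w ⟨i+1, h1⟩ : ℕ) ≤ n := Nat.lt_succ_iff.mp (w ⟨i+1, h1⟩).isLt
    have hci : chiW w i = if i + 1 < (w ⟨i, hi⟩ : ℕ) then 1 else 0 := dif_pos hi
    have hci1 : chiW w (i+1) = if i + 1 + 1 < (w ⟨i+1, h1⟩ : ℕ) then 1 else 0 := dif_pos h1
    simp only [hea, heb, hci, hci1]
    by_cases hx : i + 1 < (w ⟨i, hi⟩ : ℕ) <;> by_cases hy : i + 1 + 1 < (w ⟨i+1, h1⟩ : ℕ)
    · have hB : dBarred w ⟨i + 1, h1⟩ < dBarred w ⟨i, hi⟩ ↔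
          ((w ⟨i+1, h1⟩ : ℕ) < (w ⟨i, hi⟩ : ℕ)) := by
        simp [dBarred, hx, hy]
        all_goals omega
      simp only [hB, if_pos hx, if_pos hy]
      split_ifs <;> ring
    · have hne : (w ⟨i+1, h1⟩ : ℕ) ≠ (w ⟨i, hi⟩ : ℕ) := by
        intro he
        have h0 : (w ⟨i, hi⟩ : ℕ) ≠ 0 := by omega
        have := hw.1 ⟨i, hi⟩ ⟨i+1, h1⟩ h0 (Fin.ext he.symm)
        simp only [Fin.mk.injEq] at this
        omega
      have hba : (w ⟨i+1, h1⟩ : ℕ) < (w ⟨i, hi⟩ : ℕ) := by omega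
      have hB : ¬ (dBarred w ⟨i + 1, h1⟩ < dBarred w ⟨i, hi⟩) := by
        simp [dBarred, hx, hy]
        all_goals omega
      rw [if_pos hba, if_neg hB, if_pos hx, if_neg hy]; ring
    · have hnba : ¬ ((w ⟨i+1, h1⟩ : ℕ) < (w ⟨i, hi⟩ : ℕ)) := by omega
      have hB : dBarred w ⟨i + 1, h1⟩ < dBarred w ⟨i, hi⟩ := by
        simp [dBarred, hx, hy]
        all_goals omega
      rw [if_neg hnba, if_pos hB, if_neg hx, if_pos hy]; ring
    · have hB : dBarred w ⟨i + 1, h1⟩ < dBarred w ⟨i, hi⟩ ↔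
          ((w ⟨i+1, h1⟩ : ℕ) < (w ⟨i, hi⟩ : ℕ)) := by
        simp [dBarred, hx, hy]
      simp only [hB, if_neg hx, if_neg hy]
      split_ifs <;> ring
  · have hn : n = i + 1 := by omega
    have he1 : ¬ (∃ h : i + 1 < n, (w ⟨i + 1, h⟩ : ℕ) < (w ⟨i, Nat.lt_of_succ_lt h⟩ : ℕ)) :=
      fun ⟨h, _⟩ => h1 h
    have he2 : ¬ (∃ h : i + 1 < n, dBarred w ⟨i + 1, h⟩ < dBarred w ⟨i, Nat.lt_of_succ_lt h⟩) :=
      fun ⟨h, _⟩ => h1 h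
    have ha : (w ⟨i, hi⟩ : ℕ) ≤ n := Nat.lt_succ_iff.mp (w ⟨i, hi⟩).isLt
    have hci : chiW w i = 0 := by
      rw [chiW, dif_pos hi, if_neg]; omega
    have hci1 : chiW w (i+1) = 0 := dif_neg h1
    rw [if_neg he1, if_neg he2, hci, hci1]; ring

/-- For every decorated permutation `σ ∈ S̃_n`,
`Σ_{i ∈ DEX(σ)} i = maj(σ) - exc(σ)`. -/
theorem sum_dDEX_eq_maj_sub_exc (n : ℕ) (w : Fin n → Fin (n + 1))
    (hw : IsDecorated w) :
    ((∑ i ∈ dDEXset w, (i + 1) : ℕ) : ℤ) = dMajZ w - dExcZ w := by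
  by_cases hθ : isTheta w
  · have hempty : dDEXset w = ∅ := by
      unfold dDEXset
      apply Finset.filter_false_of_mem
      rintro i hi ⟨h, hlt⟩
      unfold isTheta at hθ
      simp [dBarred, hθ] at hlt
    simp [hempty, dMajZ, dExcZ, hθ]
  · have hmaj : (dMaj w : ℤ) = ∑ i ∈ Finset.range n,
        (if (∃ h : i + 1 < n, (w ⟨i + 1, h⟩ : ℕ) < (w ⟨i, Nat.lt_of_succ_lt h⟩ : ℕ))
          then ((i:ℤ)+1) else 0) := by
      unfold dMaj
      push_cast [Finset.sum_filter, apply_ite (Nat.cast : ℕ → ℤ)]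
      rfl
    have hdex : ((∑ i ∈ dDEXset w, (i + 1) : ℕ) : ℤ) = ∑ i ∈ Finset.range n,
        (if (∃ h : i + 1 < n, dBarred w ⟨i + 1, h⟩ < dBarred w ⟨i, Nat.lt_of_succ_lt h⟩)
          then ((i:ℤ)+1) else 0) := by
      unfold dDEXset
      push_cast [Finset.sum_filter, apply_ite (Nat.cast : ℕ → ℤ)]
      rfl
    have hexc : (dExc w : ℤ) = ∑ i ∈ Finset.range n, chiW w i := by
      have h1 : ∑ i ∈ Finset.range n, chiW w i
          = ∑ i : Fin n, (if (i:ℕ)+1 < (w i : ℕ) then (1:ℤ) else 0) := by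
        rw [← Fin.sum_univ_eq_sum_range (fun i => chiW w i) n]
        exact Finset.sum_congr rfl (fun i _ => by simp [chiW, i.isLt])
      rw [h1, ← Finset.sum_filter]
      simp [dExc]
    have tele : ∑ i ∈ Finset.range n, ((i:ℤ)+1) * (chiW w i - chiW w (i+1))
        = ∑ i ∈ Finset.range n, chiW w i := by
      have h2 : ∀ i ∈ Finset.range n, ((i:ℤ)+1) * (chiW w i - chiW w (i+1))
          = chiW w i + (((i:ℕ):ℤ) * chiW w i - (((i+1:ℕ)):ℤ) * chiW w (i+1)) := by
        intro i _; push_cast; ring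
      rw [Finset.sum_congr rfl h2, Finset.sum_add_distrib,
        Finset.sum_range_sub' (fun j => ((j:ℕ):ℤ) * chiW w j) n]
      simp [chiW_top]
    have key : (dMaj w : ℤ) - ((∑ i ∈ dDEXset w, (i + 1) : ℕ) : ℤ) = (dExc w : ℤ) := by
      rw [hmaj, hdex, ← Finset.sum_sub_distrib,
        Finset.sum_congr rfl (fun i hi => pointwise w hw i (Finset.mem_range.mp hi)),
        tele, hexc]
    simp only [dMajZ, dExcZ, if_neg hθ]
    linarith [key]
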